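/- Let 𝒟 ⊆ 𝒞 be subcategories of 𝓑 satisfying condition (RCP), ℋ := CoCone(𝒞,𝒞), and let ℋ/𝒞 be the heart of (𝒞,𝒞^⊥¹). If f̄ : Y → X is an epimorphism in the heart ℋ/𝒞 (X, Y ∈ ℋ) and Y ∈ 𝒟^⊥¹, then X ∈ 𝒟^⊥¹. In other words, the full subcategory 𝒜 of ℋ/𝒞 on the objects of ℋ∩𝒟^⊥¹ is closed under epimorphic images in the heart. -/

import Mathlib

open CategoryTheory Category Limits ZeroObject

universe v u

namespace CotorsionPaper

variable {B : Type u} [Category.{v} B] [Abelian B]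

/-- `f, g` form a short exact sequence `0 → X → Y → Z → 0`. -/
def IsSES {X Y Z : B} (f : X ⟶ Y) (g : Y ⟶ Z) : Prop :=
  ∃ w : f ≫ g = 0, (ShortComplex.mk f g w).ShortExact

/-- `Ext¹(X, Y) = 0`: every short exact sequence `0 → Y → E → X → 0` splits. -/
def Ext1Zero (X Y : B) : Prop :=
  ∀ ⦃E : B⦄ (i : Y ⟶ E) (p : E ⟶ X), IsSES i p → ∃ s : X ⟶ E, s ≫ p = 𝟙 X

/-- `Ext²(X, Y) = 0`, via dimension shifting: `Ext¹(K, Y) = 0` for any syzygy `K` of `X`. -/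
def Ext2Zero (X Y : B) : Prop :=
  ∀ ⦃K P : B⦄ (i : K ⟶ P) (p : P ⟶ X), Projective P → IsSES i p → Ext1Zero K Y

/-- A (strictly) full additive subcategory: closed under isomorphisms,
contains a zero object and is closed under finite direct sums. -/
structure AddSubcat (S : Set B) : Prop where
  zero_mem : (0 : B) ∈ S
  iso_closed : ∀ ⦃X Y : B⦄, (X ≅ Y) → X ∈ S → Y ∈ S
  sum_closed : ∀ ⦃X Y : B⦄, X ∈ S → Y ∈ S → (X ⊞ Y) ∈ S

/-- `S` is closed under direct summands (retracts). -/
def ClosedUnderSummands (S : Set B) : Prop :=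
  ∀ ⦃X Y : B⦄ (r : X ⟶ Y) (s : Y ⟶ X), s ≫ r = 𝟙 Y → X ∈ S → Y ∈ S

/-- `S` is rigid: `Ext¹(X, Y) = 0` for all `X, Y ∈ S`. -/
def Rigid (S : Set B) : Prop :=
  ∀ ⦃X⦄, X ∈ S → ∀ ⦃Y⦄, Y ∈ S → Ext1Zero X Y

/-- `S^⊥¹`. -/
def rightPerp (S : Set B) : Set B := {Y | ∀ ⦃X⦄, X ∈ S → Ext1Zero X Y}

/-- `^⊥¹S`. -/
def leftPerp (S : Set B) : Set B := {X | ∀ ⦃Y⦄, Y ∈ S → Ext1Zero X Y}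

/-- `f : X ⟶ A` is a right `S`-approximation of `A`. -/
def IsRightApprox (S : Set B) {X A : B} (f : X ⟶ A) : Prop :=
  X ∈ S ∧ ∀ ⦃X' : B⦄, X' ∈ S → ∀ g : X' ⟶ A, ∃ h : X' ⟶ X, h ≫ f = g

def ContravariantlyFinite (S : Set B) : Prop :=
  ∀ A : B, ∃ (X : B) (f : X ⟶ A), IsRightApprox S f

/-- `f : A ⟶ X` is a left `S`-approximation of `A`. -/
def IsLeftApprox (S : Set B) {A X : B} (f : A ⟶ X) : Prop :=
  X ∈ S ∧ ∀ ⦃X' : B⦄, X' ∈ S → ∀ g : A ⟶ X', ∃ h : X ⟶ X', f ≫ h = g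

def CovariantlyFinite (S : Set B) : Prop :=
  ∀ A : B, ∃ (X : B) (f : A ⟶ X), IsLeftApprox S f

/-- `(U, V)` is a cotorsion pair. -/
structure CotorsionPair (U V : Set B) : Prop where
  summands_left : ClosedUnderSummands U
  summands_right : ClosedUnderSummands V
  ext : ∀ ⦃X⦄, X ∈ U → ∀ ⦃Y⦄, Y ∈ V → Ext1Zero X Y
  resol : ∀ X : B, ∃ (VX UX : B) (i : VX ⟶ UX) (p : UX ⟶ X),
    VX ∈ V ∧ UX ∈ U ∧ IsSES i p
  coresol : ∀ X : B, ∃ (VX UX : B) (i : X ⟶ VX) (p : VX ⟶ UX),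
    VX ∈ V ∧ UX ∈ U ∧ IsSES i p

/-- `CoCone(S, T)`. -/
def CoCone (S T : Set B) : Set B :=
  {X | ∃ (B' B'' : B) (i : X ⟶ B') (p : B' ⟶ B''), B' ∈ S ∧ B'' ∈ T ∧ IsSES i p}

/-- `Cone(S, T)`. -/
def Cone (S T : Set B) : Set B :=
  {X | ∃ (B' B'' : B) (i : B' ⟶ B'') (p : B'' ⟶ X), B' ∈ S ∧ B'' ∈ T ∧ IsSES i p}

/-- The subcategory `𝒫` of projective objects. -/
def projSet : Set B := {P | Projective P}

/-- The subcategory `ℐ` of injective objects. -/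
def injSet : Set B := {I | Injective I}

/-- `Ω𝒞`, the (first) syzygy of `𝒞`. -/
def Syz (C : Set B) : Set B := CoCone projSet C

/-- Condition (RCP): `𝒫 ⊆ 𝒞`, `𝒞` rigid, contravariantly finite,
closed under direct summands (and a full additive subcategory). -/
structure RCP (C : Set B) : Prop where
  add : AddSubcat C
  proj_mem : ∀ ⦃P : B⦄, Projective P → P ∈ C
  rigid : Rigid C
  contra : ContravariantlyFinite C
  summands : ClosedUnderSummands C

/-- The category structure on the full subcategory on a set `H` (instance search no longer sees
`Set B` as `ObjectProperty B`). -/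
instance (H : Set B) : Category.{v} (ObjectProperty.FullSubcategory H) :=
  ObjectProperty.FullSubcategory.category H

/-- `f` factors through an object of `S`. -/
def FactorsThru (S : Set B) {X Y : B} (f : X ⟶ Y) : Prop :=
  ∃ (Z : B) (g : X ⟶ Z) (h : Z ⟶ Y), Z ∈ S ∧ g ≫ h = f

/-- The ideal of morphisms of the full subcategory on `H` factoring through an object of `S`. -/
def idealRel (H S : Set B) : HomRel (ObjectProperty.FullSubcategory H) :=
  fun X Y f g => FactorsThru S (show X.obj ⟶ Y.obj from f.hom - g.hom)

/-- The ideal quotient `H/S`. -/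
abbrev HeartCat (H S : Set B) := CategoryTheory.Quotient (idealRel H S)

/-- The quotient functor `H → H/S`. -/
abbrev heartQ (H S : Set B) : ObjectProperty.FullSubcategory H ⥤ HeartCat H S :=
  CategoryTheory.Quotient.functor _

/-- The zero morphism in the ideal quotient `H/S`. -/
def heartZero (H S : Set B) (X Y : HeartCat H S) : X ⟶ Y :=
  (heartQ H S).map (ObjectProperty.homMk (0 : X.as.obj ⟶ Y.as.obj))

/-- `κ` is a kernel of `φ` in the ideal quotient `H/S`. -/
structure IsKernelArrow {H S : Set B} {K X Y : HeartCat H S}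
    (κ : K ⟶ X) (φ : X ⟶ Y) : Prop where
  w : κ ≫ φ = heartZero H S K Y
  lift : ∀ ⦃T : HeartCat H S⦄ (t : T ⟶ X), t ≫ φ = heartZero H S T Y →
    ∃! u : T ⟶ K, u ≫ κ = t

/-- `π` is a cokernel of `φ` in the ideal quotient `H/S`. -/
structure IsCokernelArrow {H S : Set B} {X Y Q : HeartCat H S}
    (φ : X ⟶ Y) (π : Y ⟶ Q) : Prop where
  w : φ ≫ π = heartZero H S X Q
  desc : ∀ ⦃T : HeartCat H S⦄ (t : Y ⟶ T), φ ≫ t = heartZero H S X T →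
    ∃! u : Q ⟶ T, π ≫ u = t

/-- The class of epimorphisms in `H/S` whose kernel object lies in `A`. -/
def epiClassWithKernelIn (H S A : Set B) : MorphismProperty (HeartCat H S) :=
  fun X Y φ => Epi φ ∧ ∃ (K : HeartCat H S) (κ : K ⟶ X),
    K.as.obj ∈ A ∧ IsKernelArrow κ φ

/-- The class of monomorphisms in `H/S` whose cokernel object lies in `A`. -/
def monoClassWithCokernelIn (H S A : Set B) : MorphismProperty (HeartCat H S) :=
  fun X Y φ => Mono φ ∧ ∃ (Q : HeartCat H S) (π : Y ⟶ Q),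
    Q.as.obj ∈ A ∧ IsCokernelArrow φ π

/-- The diagram `(⋄)` associated with a morphism `f : Y ⟶ X`. -/
structure DiamondDiagram {Y X : B} (f : Y ⟶ X) {OmX PX Z₁ IY SgY Z₂ : B}
    (q : OmX ⟶ PX) (p : PX ⟶ X) (j : OmX ⟶ Z₁) (g : Z₁ ⟶ Y)
    (i : Y ⟶ IY) (c : IY ⟶ SgY) (h : X ⟶ Z₂) (e : Z₂ ⟶ SgY)
    (u : Z₁ ⟶ PX) (v : IY ⟶ Z₂) : Prop where
  projPX : Projective PX
  injIY : Injective IY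
  ses_proj : IsSES q p
  ses_pullback : IsSES j g
  ses_inj : IsSES i c
  ses_pushout : IsSES h e
  comm₁ : j ≫ u = q
  comm₂ : u ≫ p = g ≫ f
  comm₃ : f ≫ h = i ≫ v
  comm₄ : v ≫ e = c

/-- The class of morphisms `f : Y ⟶ X` admitting a diagram `(⋄)` with
`Z₁ ∈ ZCond` and `h` factoring through an object of `HCond`. -/
def Rclass (ZCond HCond : Set B) : MorphismProperty B :=
  fun Y X f => ∃ (OmX PX Z₁ IY SgY Z₂ : B) (q : OmX ⟶ PX) (p : PX ⟶ X)
    (j : OmX ⟶ Z₁) (g : Z₁ ⟶ Y) (i : Y ⟶ IY) (c : IY ⟶ SgY)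
    (h : X ⟶ Z₂) (e : Z₂ ⟶ SgY) (u : Z₁ ⟶ PX) (v : IY ⟶ Z₂),
    DiamondDiagram f q p j g i c h e u v ∧ Z₁ ∈ ZCond ∧ FactorsThru HCond h

/-- The class of morphisms `f : Y ⟶ X` admitting a diagram `(⋄)` with
`g` factoring through an object of `GCond` and `h` through an object of `HCond`. -/
def RtildeClass (GCond HCond : Set B) : MorphismProperty B :=
  fun Y X f => ∃ (OmX PX Z₁ IY SgY Z₂ : B) (q : OmX ⟶ PX) (p : PX ⟶ X)
    (j : OmX ⟶ Z₁) (g : Z₁ ⟶ Y) (i : Y ⟶ IY) (c : IY ⟶ SgY)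
    (h : X ⟶ Z₂) (e : Z₂ ⟶ SgY) (u : Z₁ ⟶ PX) (v : IY ⟶ Z₂),
    DiamondDiagram f q p j g i c h e u v ∧ FactorsThru GCond g ∧ FactorsThru HCond h

/-- The objects of the heart `ℋ` of a cotorsion pair `(U, V)`. -/
def HeartObjects (U V : Set B) : Set B :=
  {X | (∃ (VX UX : B) (i : VX ⟶ UX) (p : UX ⟶ X),
          IsSES i p ∧ VX ∈ V ∧ UX ∈ U ∩ V) ∧
       (∃ (VX UX : B) (i : X ⟶ VX) (p : VX ⟶ UX),
          IsSES i p ∧ VX ∈ U ∩ V ∧ UX ∈ U)}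


theorem IsSES.zero {X Y Z : B} {f : X ⟶ Y} {g : Y ⟶ Z} (h : IsSES f g) : f ≫ g = 0 := h.1

theorem IsSES.mono {X Y Z : B} {f : X ⟶ Y} {g : Y ⟶ Z} (h : IsSES f g) : Mono f := by
  obtain ⟨w, hS⟩ := h; exact hS.mono_f

theorem IsSES.epi {X Y Z : B} {f : X ⟶ Y} {g : Y ⟶ Z} (h : IsSES f g) : Epi g := by
  obtain ⟨w, hS⟩ := h; exact hS.epi_g

theorem IsSES.lift' {X Y Z A : B} {f : X ⟶ Y} {g : Y ⟶ Z} (h : IsSES f g)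
    (k : A ⟶ Y) (hk : k ≫ g = 0) : ∃ l : A ⟶ X, l ≫ f = k := by
  obtain ⟨w, hS⟩ := h
  haveI := hS.mono_f
  exact hS.exact.lift' k hk

theorem IsSES.desc' {X Y Z A : B} {f : X ⟶ Y} {g : Y ⟶ Z} (h : IsSES f g)
    (k : Y ⟶ A) (hk : f ≫ k = 0) : ∃ l : Z ⟶ A, g ≫ l = k := by
  obtain ⟨w, hS⟩ := h
  haveI := hS.epi_g
  exact hS.exact.desc' k hk

theorem IsSES.refinement {X Y Z : B} {f : X ⟶ Y} {g : Y ⟶ Z} (h : IsSES f g)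
    {A : B} (x : A ⟶ Y) (hx : x ≫ g = 0) :
    ∃ (A' : B) (π : A' ⟶ A) (_ : Epi π) (x₁ : A' ⟶ X), π ≫ x = x₁ ≫ f := by
  obtain ⟨w, hS⟩ := h
  exact (ShortComplex.exact_iff_exact_up_to_refinements _).1 hS.exact x hx

theorem IsSES.retraction_of_section {X Y Z : B} {f : X ⟶ Y} {g : Y ⟶ Z} (h : IsSES f g)
    {s : Z ⟶ Y} (hs : s ≫ g = 𝟙 Z) : ∃ r : Y ⟶ X, f ≫ r = 𝟙 X := by
  obtain ⟨r, hr⟩ := h.lift' (𝟙 Y - g ≫ s)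
    (by rw [Preadditive.sub_comp, id_comp, assoc, hs, comp_id, sub_self])
  refine ⟨r, ?_⟩
  haveI := h.mono
  rw [← cancel_mono f, assoc, hr, Preadditive.comp_sub, comp_id, id_comp, ← assoc, h.zero, zero_comp,
    sub_zero]

theorem IsSES.section_of_retraction {X Y Z : B} {f : X ⟶ Y} {g : Y ⟶ Z} (h : IsSES f g)
    {r : Y ⟶ X} (hr : f ≫ r = 𝟙 X) : ∃ s : Z ⟶ Y, s ≫ g = 𝟙 Z := by
  obtain ⟨s, hs⟩ := h.desc' (𝟙 Y - r ≫ f)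
    (by rw [Preadditive.comp_sub, comp_id, ← assoc, hr, id_comp, sub_self])
  refine ⟨s, ?_⟩
  haveI := h.epi
  rw [← cancel_epi g, ← assoc, hs, Preadditive.sub_comp, id_comp, assoc, h.zero, comp_zero, sub_zero,
    comp_id]

/-- Pushout of a short exact sequence `0 → A₀ → B₀ → C₀ → 0` along `α : A₀ ⟶ Z₀`. -/
theorem IsSES.pushoutSES {A₀ B₀ C₀ Z₀ : B} {a : A₀ ⟶ B₀} {b : B₀ ⟶ C₀} (h : IsSES a b)
    (α : A₀ ⟶ Z₀) :
    ∃ m : pushout α a ⟶ C₀, pushout.inr α a ≫ m = b ∧ pushout.inl α a ≫ m = 0 ∧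
      IsSES (pushout.inl α a) m := by
  have hw : α ≫ (0 : Z₀ ⟶ C₀) = a ≫ b := by rw [comp_zero, h.zero]
  refine ⟨pushout.desc 0 b hw, pushout.inr_desc _ _ _, pushout.inl_desc _ _ _, ?_⟩
  haveI := h.mono
  haveI : Mono (pushout.inl α a) := inferInstance
  haveI : Epi (pushout.desc (0 : Z₀ ⟶ C₀) b hw) := by
    have hb := h.epi
    exact epi_of_epi_fac (pushout.inr_desc _ _ hw)
  have he : Epi (biprod.desc (pushout.inl α a) (pushout.inr α a)) := by
    constructor
    intro W u v huv
    apply pushout.hom_ext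
    · simpa using biprod.inl ≫= huv
    · simpa using biprod.inr ≫= huv
  refine ⟨pushout.inl_desc _ _ _, ?_⟩
  constructor
  rw [ShortComplex.exact_iff_exact_up_to_refinements]
  intro T x hx
  dsimp at x hx ⊢
  obtain ⟨T', π, hπ, y, hy⟩ := surjective_up_to_refinements_of_epi
    (biprod.desc (pushout.inl α a) (pushout.inr α a)) x
  have hdesc : biprod.desc (pushout.inl α a) (pushout.inr α a) =
      biprod.fst ≫ pushout.inl α a + biprod.snd ≫ pushout.inr α a := by
    apply biprod.hom_ext' <;> simp
  have hy' : π ≫ x = (y ≫ biprod.fst) ≫ pushout.inl α a +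
      (y ≫ biprod.snd) ≫ pushout.inr α a := by
    rw [hy, hdesc, Preadditive.comp_add, ← assoc, ← assoc]
  have hb0 : (y ≫ biprod.snd) ≫ b = 0 := by
    have := π ≫= hx
    rw [comp_zero, ← assoc, hy'] at this
    simpa [Preadditive.add_comp, assoc, pushout.inl_desc, pushout.inr_desc] using this
  obtain ⟨T'', π₂, hπ₂, z, hz⟩ := h.refinement (y ≫ biprod.snd) hb0
  refine ⟨T'', π₂ ≫ π, epi_comp _ _, π₂ ≫ (y ≫ biprod.fst) + z ≫ α, ?_⟩
  simp only [assoc, hy', Preadditive.comp_add, Preadditive.add_comp, reassoc_of% hz,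
    ← pushout.condition]

/-- Pullback of a short exact sequence `0 → A₀ → B₀ → C₀ → 0` along `s : W₀ ⟶ C₀`. -/
theorem IsSES.pullbackSES {A₀ B₀ C₀ W₀ : B} {a : A₀ ⟶ B₀} {b : B₀ ⟶ C₀} (h : IsSES a b)
    (s : W₀ ⟶ C₀) :
    ∃ ι : A₀ ⟶ pullback b s, ι ≫ pullback.fst b s = a ∧ ι ≫ pullback.snd b s = 0 ∧
      IsSES ι (pullback.snd b s) := by
  have hw : a ≫ b = (0 : A₀ ⟶ W₀) ≫ s := by rw [h.zero, zero_comp]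
  refine ⟨pullback.lift a 0 hw, pullback.lift_fst _ _ _, pullback.lift_snd _ _ _, ?_⟩
  haveI : Mono (pullback.lift a 0 hw) := by
    have := h.mono
    exact mono_of_mono_fac (pullback.lift_fst _ _ hw)
  haveI : Epi (pullback.snd b s) := by
    have := h.epi
    infer_instance
  refine ⟨pullback.lift_snd _ _ _, ?_⟩
  constructor
  rw [ShortComplex.exact_iff_exact_up_to_refinements]
  intro T x hx
  dsimp at x hx ⊢
  have hxb : (x ≫ pullback.fst b s) ≫ b = 0 := by
    rw [assoc, pullback.condition, ← assoc, hx, zero_comp]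
  obtain ⟨T', π, hπ, z, hz⟩ := h.refinement (x ≫ pullback.fst b s) hxb
  refine ⟨T', π, hπ, z, ?_⟩
  apply pullback.hom_ext
  · rw [assoc, assoc, pullback.lift_fst]
    exact hz
  · rw [assoc, assoc, pullback.lift_snd, comp_zero, hx, comp_zero]

/-- Extend `α : A₀ ⟶ Z₀` along the mono of a SES, provided `Ext¹(C₀, Z₀) = 0`. -/
theorem IsSES.extend {A₀ B₀ C₀ Z₀ : B} {a : A₀ ⟶ B₀} {b : B₀ ⟶ C₀} (h : IsSES a b)
    (hext : Ext1Zero C₀ Z₀) (α : A₀ ⟶ Z₀) : ∃ γ : B₀ ⟶ Z₀, a ≫ γ = α := by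
  obtain ⟨m, hmr, hml, hses⟩ := h.pushoutSES α
  obtain ⟨sec, hsec⟩ := hext _ _ hses
  obtain ⟨ρ, hρ⟩ := hses.retraction_of_section hsec
  refine ⟨pushout.inr α a ≫ ρ, ?_⟩
  rw [← assoc, ← pushout.condition, assoc, hρ, comp_id]

/-- Lift `t : W₀ ⟶ C₀` along the epi of a SES, provided `Ext¹(W₀, A₀) = 0`. -/
theorem IsSES.liftOfExt {A₀ B₀ C₀ W₀ : B} {a : A₀ ⟶ B₀} {b : B₀ ⟶ C₀} (h : IsSES a b)
    (hext : Ext1Zero W₀ A₀) (t : W₀ ⟶ C₀) : ∃ l : W₀ ⟶ B₀, l ≫ b = t := by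
  obtain ⟨ι, hιf, hιs, hses⟩ := h.pullbackSES t
  obtain ⟨sec, hsec⟩ := hext _ _ hses
  refine ⟨sec ≫ pullback.fst b t, ?_⟩
  rw [assoc, pullback.condition, ← assoc, hsec, id_comp]

/-- A SES whose mono admits a retraction gives a biproduct decomposition of the middle term. -/
theorem IsSES.isoBiprod {A₀ B₀ C₀ : B} {a : A₀ ⟶ B₀} {b : B₀ ⟶ C₀} (h : IsSES a b)
    {r : B₀ ⟶ A₀} (hr : a ≫ r = 𝟙 A₀) : Nonempty (B₀ ≅ A₀ ⊞ C₀) := by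
  obtain ⟨σ, hσ⟩ := h.desc' (𝟙 B₀ - r ≫ a)
    (by rw [Preadditive.comp_sub, comp_id, ← assoc, hr, id_comp, sub_self])
  haveI := h.epi
  have hσb : σ ≫ b = 𝟙 C₀ := by
    rw [← cancel_epi b, ← assoc, hσ, Preadditive.sub_comp, id_comp, assoc, h.zero, comp_zero, sub_zero,
      comp_id]
  have hσr : σ ≫ r = 0 := by
    rw [← cancel_epi b, ← assoc, hσ, Preadditive.sub_comp, id_comp, assoc, hr, comp_id, sub_self,
      comp_zero]
  refine ⟨⟨biprod.lift r b, biprod.desc a σ, ?_, ?_⟩⟩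
  · rw [biprod.lift_desc, hσ]
    abel
  · apply biprod.hom_ext' <;> apply biprod.hom_ext <;>
      simp [hr, hσb, hσr, h.zero]



/-- The ideal relation associated with an additive subcategory is a congruence. -/
theorem congruence_idealRel (H S : Set B) (hS : AddSubcat S) :
    Congruence (idealRel H S) := by
  refine @Congruence.mk _ _ _ ⟨?_⟩ ⟨?_⟩ ?_
  rotate_right
  · intro X Y
    refine ⟨fun f => ?_, fun {f g} h => ?_, fun {f g k} h1 h2 => ?_⟩
    · exact ⟨0, 0, 0, hS.zero_mem, by simp⟩
    · obtain ⟨Z, u, v, hZ, huv⟩ := h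
      exact ⟨Z, -u, v, hZ, by rw [Preadditive.neg_comp, huv, neg_sub]⟩
    · obtain ⟨Z₁, u₁, v₁, hZ₁, e₁⟩ := h1
      obtain ⟨Z₂, u₂, v₂, hZ₂, e₂⟩ := h2
      exact ⟨Z₁ ⊞ Z₂, biprod.lift u₁ u₂, biprod.desc v₁ v₂, hS.sum_closed hZ₁ hZ₂, by
        rw [biprod.lift_desc, e₁, e₂, sub_add_sub_cancel]⟩
  · intro X Y Z f g g' h
    obtain ⟨Zc, u, v, hZ, e⟩ := h
    have e' : u ≫ v = (g.hom) - (g'.hom) := e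
    have hres : FactorsThru S ((f.hom) ≫ (g.hom) -
        (f.hom) ≫ (g'.hom)) :=
      ⟨Zc, (f.hom) ≫ u, v, hZ, by
        rw [assoc, e', Preadditive.comp_sub]⟩
    exact hres
  · intro X Y Z f f' g h
    obtain ⟨Zc, u, v, hZ, e⟩ := h
    have e' : u ≫ v = (f.hom) - (f'.hom) := e
    have hres : FactorsThru S ((f.hom) ≫ (g.hom) -
        (f'.hom) ≫ (g.hom)) :=
      ⟨Zc, u, v ≫ (g.hom), hZ, by
        rw [← assoc, e', Preadditive.sub_comp]⟩
    exact hres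

/-- `𝒜` is closed under epimorphic images in the heart. -/
theorem statement_8 {B : Type u} [Category.{v} B] [Abelian B]
    [EnoughProjectives B] [EnoughInjectives B]
    (C D : Set B) (hC : RCP C) (hD : RCP D) (hDC : D ⊆ C)
    {Y X : B} (hY : Y ∈ CoCone C C) (hX : X ∈ CoCone C C) (f : Y ⟶ X)
    (hepi : Epi ((heartQ (CoCone C C) C).map (X := ⟨Y, hY⟩) (Y := ⟨X, hX⟩) (ObjectProperty.homMk f)))
    (hYD : Y ∈ rightPerp D) :
    X ∈ rightPerp D := by
  -- Unpack the CoCone structures of X and Y.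
  obtain ⟨C₁, C₂, a, b, hC₁, hC₂, hab⟩ := id hX
  obtain ⟨D₁, D₂, a', b', hD₁, hD₂, hab'⟩ := id hY
  -- The pushout M of a' along f, with its short exact sequence 0 → X → M → D₂ → 0.
  obtain ⟨m, hnm, hhm, hM⟩ := hab'.pushoutSES f
  set hmor : X ⟶ pushout f a' := pushout.inl f a' with hmor_def
  set n : D₁ ⟶ pushout f a' := pushout.inr f a' with n_def
  -- M is in CoCone C C.
  obtain ⟨mN, hmN1, hmN2, hNses⟩ := hab.pushoutSES hmor
  obtain ⟨mN2, hmN21, hmN22, hN2ses⟩ := hM.pushoutSES a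
  have hsplitN2 : ∃ r : pushout a hmor ⟶ C₁, pushout.inl a hmor ≫ r = 𝟙 C₁ := by
    obtain ⟨sec, hsec⟩ := hC.rigid hD₂ hC₁ _ _ hN2ses
    exact hN2ses.retraction_of_section hsec
  obtain ⟨rN2, hrN2⟩ := hsplitN2
  obtain ⟨isoN2⟩ := hN2ses.isoBiprod hrN2
  have hN2mem : pushout a hmor ∈ C :=
    hC.add.iso_closed isoN2.symm (hC.add.sum_closed hC₁ hD₂)
  have hNmem : pushout hmor a ∈ C :=
    hC.add.iso_closed (pushoutSymmetry a hmor) hN2mem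
  have hMH : pushout f a' ∈ CoCone C C :=
    ⟨pushout hmor a, C₂, pushout.inl hmor a, mN, hNmem, hC₂, hNses⟩
  -- Use the epi hypothesis: hmor factors through C.
  haveI : Congruence (idealRel (CoCone C C) C) := congruence_idealRel _ _ hC.add
  haveI := hepi
  have e1 : (heartQ (CoCone C C) C).map (X := ⟨Y, hY⟩) (Y := ⟨X, hX⟩) (ObjectProperty.homMk f) ≫
      (heartQ (CoCone C C) C).map (X := ⟨X, hX⟩) (Y := ⟨pushout f a', hMH⟩) (ObjectProperty.homMk hmor) =
      (heartQ (CoCone C C) C).map (X := ⟨Y, hY⟩) (Y := ⟨X, hX⟩) (ObjectProperty.homMk f) ≫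
      (heartQ (CoCone C C) C).map (X := ⟨X, hX⟩) (Y := ⟨pushout f a', hMH⟩) (ObjectProperty.homMk 0) := by
    rw [← Functor.map_comp, ← Functor.map_comp]
    refine CategoryTheory.Quotient.sound _ ⟨D₁, a', n, hD₁, ?_⟩
    show a' ≫ n = (f ≫ hmor) - (f ≫ (0 : X ⟶ pushout f a'))
    rw [comp_zero, sub_zero]
    exact pushout.condition.symm
  have e2 := (cancel_epi _).mp e1
  rw [Quotient.functor_map_eq_iff] at e2
  obtain ⟨Cm, α, β, hCm, hαβ⟩ := e2
  have hαβ' : α ≫ β = hmor := by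
    have : α ≫ β = hmor - (0 : X ⟶ pushout f a') := hαβ
    rwa [sub_zero] at this
  -- Extend α along a, using rigidity of C.
  obtain ⟨γ, hγ⟩ := hab.extend (hC.rigid hC₂ hCm) α
  set w : C₁ ⟶ pushout f a' := γ ≫ β with w_def
  have haw : a ≫ w = hmor := by rw [w_def, ← assoc, hγ, hαβ']
  -- The induced map g' : C₂ ⟶ D₂.
  obtain ⟨g', hg'⟩ : ∃ g' : C₂ ⟶ D₂, b ≫ g' = w ≫ m := by
    refine hab.desc' (w ≫ m) ?_
    rw [← assoc, haw, hhm]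
  -- Now prove X ∈ rightPerp D.
  intro W hW E i p hSES
  -- Step 8: extend a along i.
  obtain ⟨r, hir⟩ := hSES.extend (hC.rigid (hDC hW) hC₁) a
  -- Step 9: the induced map s : W ⟶ C₂.
  obtain ⟨s, hps⟩ : ∃ s : W ⟶ C₂, p ≫ s = r ≫ b := by
    refine hSES.desc' (r ≫ b) ?_
    rw [← assoc, hir, hab.zero]
  -- Step 10: lift s ≫ g' along b'.
  obtain ⟨u', hu'⟩ := hab'.liftOfExt (hYD hW) (s ≫ g')
  -- Step 11: z : W ⟶ M.
  set z : W ⟶ pushout f a' := u' ≫ n with z_def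
  have hzm : z ≫ m = s ≫ g' := by rw [z_def, assoc, hnm, hu']
  -- Step 12: pull back b along s and split.
  obtain ⟨ι, hιf, hιs, hPses⟩ := hab.pullbackSES s
  obtain ⟨ψ, hψ⟩ : ∃ ψ : pullback b s ⟶ X,
      ψ ≫ hmor = pullback.fst b s ≫ w - pullback.snd b s ≫ z := by
    refine hM.lift' _ ?_
    simp only [Preadditive.sub_comp, assoc]
    rw [hzm, ← hg', ← assoc, pullback.condition, assoc, sub_self]
  have hιψ : ι ≫ ψ = 𝟙 X := by
    haveI := hM.mono
    rw [← cancel_mono hmor]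
    calc (ι ≫ ψ) ≫ hmor = ι ≫ (ψ ≫ hmor) := by rw [assoc]
      _ = ι ≫ (pullback.fst b s ≫ w) - ι ≫ (pullback.snd b s ≫ z) := by
          rw [hψ, Preadditive.comp_sub]
      _ = (ι ≫ pullback.fst b s) ≫ w - (ι ≫ pullback.snd b s) ≫ z := by
          rw [assoc, assoc]
      _ = hmor := by rw [hιf, hιs, haw, zero_comp, sub_zero]
      _ = 𝟙 X ≫ hmor := by rw [id_comp]
  obtain ⟨σ, hσ⟩ := hPses.section_of_retraction hιψ
  set u : W ⟶ C₁ := σ ≫ pullback.fst b s with u_def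
  have hub : u ≫ b = s := by
    rw [u_def, assoc, pullback.condition, ← assoc, hσ, id_comp]
  -- Step 13: the retraction of i.
  obtain ⟨q, hq⟩ : ∃ q : E ⟶ X, q ≫ a = r - p ≫ u := by
    refine hab.lift' (r - p ≫ u) ?_
    rw [Preadditive.sub_comp, assoc, hub, hps, sub_self]
  have hiq : i ≫ q = 𝟙 X := by
    haveI := hab.mono
    rw [← cancel_mono a]
    calc (i ≫ q) ≫ a = i ≫ (q ≫ a) := by rw [assoc]
      _ = i ≫ r - i ≫ (p ≫ u) := by rw [hq, Preadditive.comp_sub]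
      _ = a - (i ≫ p) ≫ u := by rw [hir, assoc]
      _ = a := by rw [hSES.zero, zero_comp, sub_zero]
      _ = 𝟙 X ≫ a := by rw [id_comp]
  exact hSES.section_of_retraction hiq


end CotorsionPaper
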